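/- arXiv:1108.5881 — 5 statements merged into one kernel-verified Lean document; each statement's English description precedes it below -/
import Mathlib

section
/- The spread code constructed from the companion matrix P (codewords rs[B_0 ... B_{l-1}] with B_i ∈ F_q[P], first nonzero block equal to the identity) achieves the Singleton-like bound: it has cardinality (q^n − 1)/(q^k − 1) and minimum subspace distance 2k. -/
/-- The `k × k` companion matrix of a polynomial `p`. -/
def companionMatrix {F : Type*} [Field F] (p : Polynomial F) (k : ℕ) :
    Matrix (Fin k) (Fin k) F :=
  Matrix.of fun i j =>
    if (i : ℕ) + 1 = k then -p.coeff (j : ℕ)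
    else if (j : ℕ) = (i : ℕ) + 1 then 1 else 0

open Polynomial Matrix

namespace Stmt7Aux

variable {F : Type*} [Field F] {k : ℕ}

lemma row_step (p : Polynomial F) (i : Fin k) (h : (i : ℕ) + 1 < k) :
    Matrix.vecMul (Pi.single i 1) (companionMatrix p k)
      = Pi.single (⟨(i : ℕ) + 1, h⟩ : Fin k) 1 := by
  rw [Matrix.single_one_vecMul]
  funext j
  simp only [Matrix.row_apply, companionMatrix, Matrix.of_apply, Pi.single_apply]
  rw [if_neg (by omega)]
  by_cases hj : (j : ℕ) = (i : ℕ) + 1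
  · rw [if_pos hj, if_pos (by apply Fin.ext; simpa using hj)]
  · rw [if_neg hj, if_neg (fun hh => hj (by rw [hh]))]

lemma row_last (hk : 0 < k) (p : Polynomial F) :
    Matrix.vecMul (Pi.single (⟨k - 1, by omega⟩ : Fin k) 1) (companionMatrix p k)
      = fun j : Fin k => -p.coeff (j : ℕ) := by
  rw [Matrix.single_one_vecMul]
  funext j
  simp only [Matrix.row_apply, companionMatrix, Matrix.of_apply]
  rw [if_pos (show k - 1 + 1 = k by omega)]

lemma e0_pow (hk : 0 < k) (p : Polynomial F) : ∀ m, ∀ hm : m < k,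
    Matrix.vecMul (Pi.single (⟨0, hk⟩ : Fin k) 1) (companionMatrix p k ^ m)
      = Pi.single (⟨m, hm⟩ : Fin k) 1
  | 0, hm => by rw [pow_zero, Matrix.vecMul_one]
  | m + 1, hm => by
      rw [pow_succ, ← Matrix.vecMul_vecMul, e0_pow hk p m (by omega),
        row_step p ⟨m, by omega⟩ (by exact hm)]

/-- vecMul with fixed vector, as a linear map in the matrix argument. -/
def vecMulLin (v : Fin k → F) : Matrix (Fin k) (Fin k) F →ₗ[F] (Fin k → F) where
  toFun M := Matrix.vecMul v M
  map_add' A B := Matrix.vecMul_add A B v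
  map_smul' c A := by
    funext j
    simp [Matrix.vecMul, dotProduct, Finset.mul_sum, mul_left_comm]

lemma e0_aeval (hk : 0 < k) (p g : Polynomial F) (hg : g.natDegree < k) :
    Matrix.vecMul (Pi.single (⟨0, hk⟩ : Fin k) 1) (aeval (companionMatrix p k) g)
      = fun j : Fin k => g.coeff (j : ℕ) := by
  set e0 : Fin k → F := Pi.single (⟨0, hk⟩ : Fin k) 1 with he0
  set Cp := companionMatrix p k with hCp
  rw [Polynomial.aeval_eq_sum_range' hg]
  have h1 : Matrix.vecMul e0 (∑ i ∈ Finset.range k, g.coeff i • Cp ^ i)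
      = ∑ i ∈ Finset.range k, g.coeff i • Matrix.vecMul e0 (Cp ^ i) := by
    have := map_sum (vecMulLin e0) (fun i => g.coeff i • Cp ^ i) (Finset.range k)
    simp only [_root_.map_smul] at this
    simpa only [vecMulLin, LinearMap.coe_mk, AddHom.coe_mk] using this
  rw [h1]
  funext j
  rw [Finset.sum_apply]
  have h2 : ∀ i ∈ Finset.range k, (g.coeff i • Matrix.vecMul e0 (Cp ^ i)) j
      = if (j : ℕ) = i then g.coeff i else 0 := by
    intro i hi
    rw [e0_pow hk p i (Finset.mem_range.mp hi)]
    simp only [Pi.smul_apply, Pi.single_apply, Fin.ext_iff, smul_eq_mul]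
    split_ifs <;> simp
  rw [Finset.sum_congr rfl h2, Finset.sum_ite_eq (Finset.range k) (j : ℕ) g.coeff,
    if_pos (Finset.mem_range.mpr j.isLt)]

lemma aeval_self (hk : 0 < k) {p : Polynomial F} (hmonic : p.Monic) (hdeg : p.natDegree = k) :
    aeval (companionMatrix p k) p = 0 := by
  set Cp := companionMatrix p k with hCp
  set e0 : Fin k → F := Pi.single (⟨0, hk⟩ : Fin k) 1 with he0
  have hq : (p - X ^ k).natDegree < k := by
    by_cases h0 : p - X ^ k = 0
    · rw [h0]; simpa using hk
    · exact Polynomial.natDegree_lt_iff_degree_lt h0 |>.mpr (by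
          rw [Polynomial.degree_lt_iff_coeff_zero]
          intro m hm
          have hm' : k ≤ m := by exact_mod_cast hm
          rw [Polynomial.coeff_sub, Polynomial.coeff_X_pow]
          rcases eq_or_lt_of_le hm' with h | h
          · rw [if_pos h.symm, ← h, ← hdeg, hmonic.coeff_natDegree]; ring
          · rw [if_neg (by omega), Polynomial.coeff_eq_zero_of_natDegree_lt (by omega)]; ring)
  have e0p : Matrix.vecMul e0 (aeval Cp p) = 0 := by
    have hsplit : p = (p - X ^ k) + X ^ k := by ring
    have h2 : aeval Cp p = aeval Cp (p - X ^ k) + Cp ^ k := by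
      conv_lhs => rw [hsplit]
      rw [map_add, map_pow, Polynomial.aeval_X]
    have h3 : Matrix.vecMul e0 (Cp ^ k) = fun j : Fin k => -p.coeff (j : ℕ) := by
      have hkk : Cp ^ k = Cp ^ (k - 1) * Cp := by rw [← pow_succ]; congr 1; omega
      rw [hkk, ← Matrix.vecMul_vecMul, he0, e0_pow hk p (k - 1) (by omega), row_last hk p]
    rw [h2, Matrix.vecMul_add, e0_aeval hk p _ hq, h3]
    funext j
    have : ((j : ℕ) = k) = False := by simp [j.isLt.ne]
    simp [Polynomial.coeff_sub, Polynomial.coeff_X_pow, this]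
  ext i j
  have h4 : Pi.single i (1 : F) = Matrix.vecMul e0 (Cp ^ (i : ℕ)) := by
    rw [he0, e0_pow hk p (i : ℕ) i.isLt]
  have hc : Cp ^ (i : ℕ) * aeval Cp p = aeval Cp p * Cp ^ (i : ℕ) := by
    have := congrArg (aeval Cp) (mul_comm (X ^ (i : ℕ)) p)
    simpa [_root_.map_mul, Polynomial.aeval_X_pow] using this
  have hi : Matrix.vecMul (Pi.single i 1) (aeval Cp p) = 0 := by
    rw [h4, Matrix.vecMul_vecMul, hc, ← Matrix.vecMul_vecMul, e0p, Matrix.zero_vecMul]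
  rw [Matrix.single_one_vecMul] at hi
  simpa using congrFun hi j

/-- Every element of the adjoined algebra is the value of a polynomial of degree `< k`. -/
lemma rep_lt (hk : 0 < k) {p : Polynomial F} (hmonic : p.Monic) (hdeg : p.natDegree = k)
    {A : Matrix (Fin k) (Fin k) F}
    (hA : A ∈ Algebra.adjoin F ({companionMatrix p k} : Set (Matrix (Fin k) (Fin k) F))) :
    ∃ r : Polynomial F, r.natDegree < k ∧ aeval (companionMatrix p k) r = A := by
  rw [Algebra.adjoin_singleton_eq_range_aeval] at hA
  obtain ⟨g, hg⟩ := hA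
  have hg' : aeval (companionMatrix p k) g = A := hg
  have hp1 : p ≠ 1 := by intro h; rw [h] at hdeg; simp at hdeg; omega
  refine ⟨g %ₘ p, hdeg ▸ Polynomial.natDegree_modByMonic_lt g hmonic hp1, ?_⟩
  conv_rhs => rw [← hg', ← Polynomial.modByMonic_add_div g p]
  rw [map_add, _root_.map_mul, aeval_self hk hmonic hdeg, zero_mul, add_zero]

lemma inj_of_mem (hk : 0 < k) {p : Polynomial F} (hmonic : p.Monic) (hdeg : p.natDegree = k)
    {A : Matrix (Fin k) (Fin k) F}
    (hA : A ∈ Algebra.adjoin F ({companionMatrix p k} : Set (Matrix (Fin k) (Fin k) F)))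
    (h0 : Matrix.vecMul (Pi.single (⟨0, hk⟩ : Fin k) 1) A = 0) : A = 0 := by
  obtain ⟨r, hr, hAr⟩ := rep_lt hk hmonic hdeg hA
  have hco : (fun j : Fin k => r.coeff (j : ℕ)) = 0 := by
    rw [← e0_aeval hk p r hr, hAr, h0]
  have hr0 : r = 0 := by
    ext n
    by_cases hn : n < k
    · simpa using congrFun hco ⟨n, hn⟩
    · exact Polynomial.coeff_eq_zero_of_natDegree_lt (by omega)
  rw [← hAr, hr0, map_zero]

lemma exists_rep (hk : 0 < k) (p : Polynomial F) (v : Fin k → F) :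
    ∃ A ∈ Algebra.adjoin F ({companionMatrix p k} : Set (Matrix (Fin k) (Fin k) F)),
      Matrix.vecMul (Pi.single (⟨0, hk⟩ : Fin k) 1) A = v := by
  set g : Polynomial F := ∑ i : Fin k, Polynomial.C (v i) * X ^ (i : ℕ) with hgdef
  have hdg : g.natDegree < k := by
    have h1 : g.natDegree ≤ k - 1 := Polynomial.natDegree_sum_le_of_forall_le _ _ fun i _ =>
      le_trans (Polynomial.natDegree_C_mul_X_pow_le (v i) (i : ℕ)) (by omega)
    omega
  have hcoeff : ∀ j : Fin k, g.coeff (j : ℕ) = v j := by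
    intro j
    rw [hgdef, Polynomial.finset_sum_coeff, Finset.sum_eq_single j]
    · simp [Polynomial.coeff_C_mul_X_pow]
    · intro i _ hij
      rw [Polynomial.coeff_C_mul_X_pow, if_neg (fun h => hij (Fin.ext h.symm))]
    · simp
  refine ⟨aeval (companionMatrix p k) g, ?_, ?_⟩
  · rw [Algebra.adjoin_singleton_eq_range_aeval]; exact ⟨g, rfl⟩
  · rw [e0_aeval hk p g hdg]
    funext j
    exact hcoeff j

lemma exists_inv (hk : 0 < k) {p : Polynomial F} (hmonic : p.Monic) (hirr : Irreducible p)
    (hdeg : p.natDegree = k) {A : Matrix (Fin k) (Fin k) F}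
    (hA : A ∈ Algebra.adjoin F ({companionMatrix p k} : Set (Matrix (Fin k) (Fin k) F)))
    (hA0 : A ≠ 0) :
    ∃ A' ∈ Algebra.adjoin F ({companionMatrix p k} : Set (Matrix (Fin k) (Fin k) F)),
      A' * A = 1 ∧ A * A' = 1 := by
  obtain ⟨r, hr, hAr⟩ := rep_lt hk hmonic hdeg hA
  have hr0 : r ≠ 0 := by
    intro h; apply hA0; rw [← hAr, h, map_zero]
  have hnd : ¬ p ∣ r := by
    intro hdvd
    have := Polynomial.natDegree_le_of_dvd hdvd hr0
    omega
  obtain ⟨a, b, hab⟩ := (hirr.coprime_iff_not_dvd.mpr hnd)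
  refine ⟨aeval (companionMatrix p k) b, ?_, ?_, ?_⟩
  · rw [Algebra.adjoin_singleton_eq_range_aeval]; exact ⟨b, rfl⟩
  · have := congrArg (aeval (companionMatrix p k)) hab
    simpa [map_add, _root_.map_mul, aeval_self hk hmonic hdeg, hAr] using this
  · have hab' : r * b + p * a = 1 := by linear_combination hab
    have := congrArg (aeval (companionMatrix p k)) hab'
    simpa [map_add, _root_.map_mul, aeval_self hk hmonic hdeg, hAr] using this

lemma geom_aux (x : ℕ) (hx : 1 ≤ x) : ∀ n, (∑ i ∈ Finset.range n, x ^ i) * (x - 1) = x ^ n - 1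
  | 0 => by simp
  | n + 1 => by
    rw [Finset.sum_range_succ, add_mul, geom_aux x hx n, pow_succ]
    have h1 : 1 ≤ x ^ n := Nat.one_le_pow _ _ hx
    have h2 : x ^ n ≤ x ^ n * x := Nat.le_mul_of_pos_right _ hx
    have h3 : x ^ n * (x - 1) = x ^ n * x - x ^ n := by rw [Nat.mul_sub, mul_one]
    omega

end Stmt7Aux

/-- The spread code constructed from the companion matrix `P` (codewords are
row spaces of `[B_0 | … | B_{l-1}]` with `B_i ∈ F_q[P]` and first nonzero block the
identity) achieves the Singleton-like bound: it has cardinality `(q^n − 1)/(q^k − 1)`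
(with `n = k·l`) and minimum subspace distance `2k`. -/
theorem stmt7 (q k l : ℕ) (F : Type*) [Field F] [Fintype F] (hq : Fintype.card F = q)
    (hk : 0 < k) (hl : 0 < l)
    (p : Polynomial F) (hmonic : p.Monic) (hirr : Irreducible p) (hdeg : p.natDegree = k)
    (P : Matrix (Fin k) (Fin k) F) (hP : P = companionMatrix p k) :
    let C : Set (Submodule F (Fin l × Fin k → F)) :=
      {U | ∃ B : Fin l → Matrix (Fin k) (Fin k) F,
        (∀ j, B j ∈ Algebra.adjoin F ({P} : Set (Matrix (Fin k) (Fin k) F))) ∧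
        (∃ j0 : Fin l, (∀ j, j < j0 → B j = 0) ∧ B j0 = 1) ∧
        U = Submodule.span F
          (Set.range fun i : Fin k => fun jt : Fin l × Fin k => B jt.1 i jt.2)}
    C.ncard = (q ^ (k * l) - 1) / (q ^ k - 1) ∧
      ∀ U ∈ C, ∀ V ∈ C, U ≠ V →
        Module.finrank F ↥(U ⊔ V) - Module.finrank F ↥(U ⊓ V) = 2 * k := by
  intro C
  subst hP
  classical
  set e0 : Fin k → F := Pi.single (⟨0, hk⟩ : Fin k) 1 with he0
  -- the linear map whose range is the row space of [B_0 | ... | B_{l-1}]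
  let fB : (Fin l → Matrix (Fin k) (Fin k) F) → ((Fin k → F) →ₗ[F] (Fin l × Fin k → F)) :=
    fun B =>
      { toFun := fun v jt => Matrix.vecMul v (B jt.1) jt.2
        map_add' := fun v w => by funext jt; simp [Matrix.add_vecMul]
        map_smul' := fun c v => by funext jt; simp [Matrix.smul_vecMul] }
  have hspan : ∀ B : Fin l → Matrix (Fin k) (Fin k) F,
      Submodule.span F (Set.range fun i : Fin k => fun jt : Fin l × Fin k => B jt.1 i jt.2)
        = LinearMap.range (fB B) := by
    intro B
    have hrows : (fun i : Fin k => fun jt : Fin l × Fin k => B jt.1 i jt.2)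
        = fun i => fB B (Pi.basisFun F (Fin k) i) := by
      funext i jt
      simp [fB, Pi.basisFun_apply, Matrix.single_one_vecMul]
    rw [hrows, LinearMap.range_eq_map, ← (Pi.basisFun F (Fin k)).span_eq, Submodule.map_span]
    congr 1
    rw [← Set.range_comp]
    rfl
  let Nset : Set (Fin l → Matrix (Fin k) (Fin k) F) :=
    {B | (∀ j, B j ∈ Algebra.adjoin F
            ({companionMatrix p k} : Set (Matrix (Fin k) (Fin k) F))) ∧
         ∃ j0 : Fin l, (∀ j, j < j0 → B j = 0) ∧ B j0 = 1}
  -- any element in the row spaces of two distinct normalized codewords is zero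
  have key : ∀ B ∈ Nset, ∀ B' ∈ Nset, B ≠ B' →
      ∀ x, x ∈ LinearMap.range (fB B) → x ∈ LinearMap.range (fB B') → x = 0 := by
    rintro B ⟨hBmem, j0, hj0, hj01⟩ B' ⟨hBmem', j0', hj0', hj01'⟩ hne x hx hx'
    obtain ⟨v, hv⟩ := hx
    obtain ⟨w, hw⟩ := hx'
    obtain ⟨A, hAmem, hAe⟩ := Stmt7Aux.exists_rep hk p v
    obtain ⟨A', hAmem', hAe'⟩ := Stmt7Aux.exists_rep hk p w
    have heq : ∀ j : Fin l, A * B j = A' * B' j := by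
      intro j
      have h1 : Matrix.vecMul e0 (A * B j) = Matrix.vecMul v (B j) := by
        rw [← Matrix.vecMul_vecMul, hAe]
      have h1' : Matrix.vecMul e0 (A' * B' j) = Matrix.vecMul w (B' j) := by
        rw [← Matrix.vecMul_vecMul, hAe']
      have hx1 : Matrix.vecMul v (B j) = fun t => x (j, t) := by
        funext t; exact congrFun hv (j, t)
      have hx1' : Matrix.vecMul w (B' j) = fun t => x (j, t) := by
        funext t; exact congrFun hw (j, t)
      have hsub : Matrix.vecMul e0 (A * B j - A' * B' j) = 0 := by
        rw [Matrix.vecMul_sub, h1, h1', hx1, hx1', sub_self]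
      have h3 := Stmt7Aux.inj_of_mem hk hmonic hdeg
        (sub_mem (mul_mem hAmem (hBmem j)) (mul_mem hAmem' (hBmem' j))) hsub
      exact sub_eq_zero.mp h3
    rcases lt_trichotomy j0 j0' with hlt | heq0 | hgt
    · have hA0 : A = 0 := by
        have h5 := heq j0
        rwa [hj01, mul_one, hj0' j0 hlt, mul_zero] at h5
      have hv0 : v = 0 := by rw [← hAe, hA0, Matrix.vecMul_zero]
      rw [← hv, hv0, map_zero]
    · have hAA' : A = A' := by
        have h5 := heq j0
        rwa [hj01, mul_one, heq0, hj01', mul_one] at h5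
      by_cases hA0 : A = 0
      · have hv0 : v = 0 := by rw [← hAe, hA0, Matrix.vecMul_zero]
        rw [← hv, hv0, map_zero]
      · exfalso
        obtain ⟨Ai, hAimem, hAi1, hAi2⟩ :=
          Stmt7Aux.exists_inv hk hmonic hirr hdeg hAmem hA0
        apply hne
        funext j
        have h5 := heq j
        rw [← hAA'] at h5
        calc B j = (Ai * A) * B j := by rw [hAi1, one_mul]
          _ = Ai * (A * B j) := by rw [mul_assoc]
          _ = Ai * (A * B' j) := by rw [h5]
          _ = (Ai * A) * B' j := by rw [mul_assoc]
          _ = B' j := by rw [hAi1, one_mul]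
    · have hA0 : A' = 0 := by
        have h5 := heq j0'
        rw [hj01', mul_one, hj0 j0' hgt, mul_zero] at h5
        exact h5.symm
      have hw0 : w = 0 := by rw [← hAe', hA0, Matrix.vecMul_zero]
      rw [← hw, hw0, map_zero]
  -- injectivity of fB for normalized B, and rank computation
  have hinjf : ∀ B : Fin l → Matrix (Fin k) (Fin k) F, ∀ j0 : Fin l, B j0 = 1 →
      Function.Injective (fB B) := by
    intro B j0 hj01
    rw [← LinearMap.ker_eq_bot, Submodule.eq_bot_iff]
    intro v hv
    have h := LinearMap.mem_ker.mp hv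
    have h2 : Matrix.vecMul v (B j0) = 0 := by
      funext t; exact congrFun h (j0, t)
    rwa [hj01, Matrix.vecMul_one] at h2
  have hrank : ∀ B : Fin l → Matrix (Fin k) (Fin k) F, ∀ j0 : Fin l, B j0 = 1 →
      Module.finrank F ↥(LinearMap.range (fB B)) = k := by
    intro B j0 hj01
    rw [LinearMap.finrank_range_of_inj (hinjf B j0 hj01),
      Module.finrank_fintype_fun_eq_card, Fintype.card_fin]
  have hone : (1 : Matrix (Fin k) (Fin k) F) ≠ 0 := by
    intro h
    have := congr_fun (congr_fun h ⟨0, hk⟩) ⟨0, hk⟩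
    simp [Matrix.one_apply] at this
  constructor
  · -- cardinality
    have hCimg : C = (fun B : Fin l → Matrix (Fin k) (Fin k) F =>
        Submodule.span F
          (Set.range fun i : Fin k => fun jt : Fin l × Fin k => B jt.1 i jt.2)) '' Nset := by
      ext U
      constructor
      · rintro ⟨B, h1, h2, rfl⟩; exact ⟨B, ⟨h1, h2⟩, rfl⟩
      · rintro ⟨B, ⟨h1, h2⟩, rfl⟩; exact ⟨B, h1, h2, rfl⟩
    have hinjOn : Set.InjOn (fun B : Fin l → Matrix (Fin k) (Fin k) F =>
        Submodule.span F
          (Set.range fun i : Fin k => fun jt : Fin l × Fin k => B jt.1 i jt.2)) Nset := by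
      intro B hB B' hB' hBB'
      by_contra hne
      obtain ⟨j0, -, hj01⟩ := hB.2
      have hBB'' : Submodule.span F
            (Set.range fun i : Fin k => fun jt : Fin l × Fin k => B jt.1 i jt.2)
          = Submodule.span F
            (Set.range fun i : Fin k => fun jt : Fin l × Fin k => B' jt.1 i jt.2) := hBB'
      have hx1 : fB B e0 ∈ LinearMap.range (fB B) := ⟨e0, rfl⟩
      have hx2 : fB B e0 ∈ LinearMap.range (fB B') := by
        rw [← hspan B', ← hBB'', hspan B]; exact hx1
      have h0 := key B hB B' hB' hne (fB B e0) hx1 hx2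
      have := congrFun h0 (j0, ⟨0, hk⟩)
      simp only [fB, LinearMap.coe_mk, AddHom.coe_mk, hj01, Matrix.vecMul_one] at this
      rw [he0] at this
      simp [Pi.single_apply] at this
    rw [hCimg, Set.ncard_image_of_injOn hinjOn]
    -- count Nset
    have eK : ↥(Algebra.adjoin F
        ({companionMatrix p k} : Set (Matrix (Fin k) (Fin k) F))) ≃ (Fin k → F) := by
      refine Equiv.ofBijective
        (fun A => Matrix.vecMul e0 (A : Matrix (Fin k) (Fin k) F)) ⟨?_, ?_⟩
      · intro A A' h
        apply Subtype.ext
        have hsub : Matrix.vecMul e0 ((A : Matrix (Fin k) (Fin k) F) - (A' : Matrix (Fin k) (Fin k) F)) = 0 := by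
          have h' : Matrix.vecMul e0 (A : Matrix (Fin k) (Fin k) F)
              = Matrix.vecMul e0 (A' : Matrix (Fin k) (Fin k) F) := h
          rw [Matrix.vecMul_sub, h', sub_self]
        exact sub_eq_zero.mp (Stmt7Aux.inj_of_mem hk hmonic hdeg (sub_mem A.2 A'.2) hsub)
      · intro v
        obtain ⟨A, hA, hAe⟩ := Stmt7Aux.exists_rep hk p v
        exact ⟨⟨A, hA⟩, hAe⟩
    haveI : Finite ↥(Algebra.adjoin F
        ({companionMatrix p k} : Set (Matrix (Fin k) (Fin k) F))) := Finite.of_equiv _ eK.symm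
    haveI : Fintype ↥(Algebra.adjoin F
        ({companionMatrix p k} : Set (Matrix (Fin k) (Fin k) F))) := Fintype.ofFinite _
    have hKcard : Fintype.card ↥(Algebra.adjoin F
        ({companionMatrix p k} : Set (Matrix (Fin k) (Fin k) F))) = q ^ k := by
      rw [Fintype.card_congr eK, Fintype.card_fun, Fintype.card_fin, hq]
    -- bijection with the sigma type
    let K := Algebra.adjoin F ({companionMatrix p k} : Set (Matrix (Fin k) (Fin k) F))
    let G : (Σ j0 : Fin l, ({j : Fin l // j0 < j} → K)) → (Fin l → Matrix (Fin k) (Fin k) F) :=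
      fun s j => if h : s.1 < j then (s.2 ⟨j, h⟩ : Matrix (Fin k) (Fin k) F)
        else if j = s.1 then 1 else 0
    have hGmem : ∀ s, G s ∈ Nset := by
      intro s
      constructor
      · intro j
        by_cases h : s.1 < j
        · simp only [G, dif_pos h]; exact (s.2 ⟨j, h⟩).2
        · by_cases h2 : j = s.1
          · simp only [G, dif_neg h, if_pos h2]; exact one_mem _
          · simp only [G, dif_neg h, if_neg h2]; exact zero_mem _
      · refine ⟨s.1, fun j hj => ?_, ?_⟩
        · simp only [G, dif_neg (lt_asymm hj), if_neg (ne_of_lt hj)]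
        · simp only [G, dif_neg (lt_irrefl s.1)]
          simp
    have hGinj : Function.Injective G := by
      rintro ⟨j0, c⟩ ⟨j0', c'⟩ h
      have h1 : j0 = j0' := by
        by_contra hne
        rcases lt_or_gt_of_ne hne with hlt | hgt
        · have h2 := congrFun h j0
          simp only [G, dif_neg (lt_irrefl j0), if_pos rfl,
            dif_neg (lt_asymm hlt), if_neg hne] at h2
          exact hone h2
        · have h2 := congrFun h j0'
          simp only [G, dif_neg (lt_irrefl j0'), if_pos rfl,
            dif_neg (lt_asymm hgt), if_neg (Ne.symm hne)] at h2
          exact hone h2.symm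
      subst h1
      congr 1
      funext x
      have h2 := congrFun h x.1
      simp only [G, dif_pos x.2] at h2
      exact Subtype.ext h2
    have hGsurj : ∀ B ∈ Nset, ∃ s, G s = B := by
      rintro B ⟨hmem, j0, hj0, hj01⟩
      refine ⟨⟨j0, fun j => ⟨B j.1, hmem j.1⟩⟩, ?_⟩
      funext j
      rcases lt_trichotomy j0 j with h | h | h
      · simp only [G, dif_pos h]
      · subst h
        simp only [G, dif_neg (lt_irrefl j0), if_pos rfl]
        exact hj01.symm
      · simp only [G, dif_neg (lt_asymm h), if_neg (ne_of_lt h)]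
        exact (hj0 j h).symm
    have eN : (Σ j0 : Fin l, ({j : Fin l // j0 < j} → K)) ≃ ↥Nset :=
      Equiv.ofBijective (fun s => ⟨G s, hGmem s⟩)
        ⟨fun a b hab => hGinj (congrArg Subtype.val hab),
         fun ⟨B, hB⟩ => by
          obtain ⟨s, hs⟩ := hGsurj B hB
          exact ⟨s, Subtype.ext hs⟩⟩
    have hNcard : Nset.ncard = ∑ j0 : Fin l, (q ^ k) ^ (l - 1 - (j0 : ℕ)) := by
      rw [← Nat.card_coe_set_eq, ← Nat.card_congr eN, Nat.card_eq_fintype_card,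
        Fintype.card_sigma]
      refine Finset.sum_congr rfl fun j0 _ => ?_
      have hsub : Fintype.card {j : Fin l // j0 < j} = l - 1 - (j0 : ℕ) := by
        rw [Fintype.card_congr (Equiv.subtypeEquivRight
          (fun j => (Set.mem_Ioi (b := j0) (x := j)).symm))]
        exact (Set.toFinset_card _).symm.trans (by rw [Set.toFinset_Ioi, Fin.card_Ioi])
      rw [Fintype.card_fun, hKcard, hsub]
    rw [hNcard]
    have hq2 : 2 ≤ q := hq ▸ Fintype.one_lt_card
    have hx2 : 2 ≤ q ^ k := Nat.one_lt_pow hk.ne' hq2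
    rw [Fin.sum_univ_eq_sum_range (fun m => (q ^ k) ^ (l - 1 - m)) l,
      Finset.sum_range_reflect (fun m => (q ^ k) ^ m) l]
    have hgeom := Stmt7Aux.geom_aux (q ^ k) (by omega) l
    rw [pow_mul]
    exact (Nat.div_eq_of_eq_mul_left (by omega) hgeom.symm).symm
  · -- minimum distance
    intro U hU V hV hUV
    obtain ⟨B, hBmem, ⟨j0, hj0, hj01⟩, hUeq⟩ := hU
    obtain ⟨B', hBmem', ⟨j0', hj0', hj01'⟩, hVeq⟩ := hV
    have hBne : B ≠ B' := by
      rintro rfl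
      exact hUV (hUeq.trans hVeq.symm)
    have hinf : LinearMap.range (fB B) ⊓ LinearMap.range (fB B') = ⊥ := by
      rw [Submodule.eq_bot_iff]
      intro x hx
      exact key B ⟨hBmem, j0, hj0, hj01⟩ B' ⟨hBmem', j0', hj0', hj01'⟩ hBne x
        (Submodule.mem_inf.mp hx).1 (Submodule.mem_inf.mp hx).2
    have hsum := Submodule.finrank_sup_add_finrank_inf_eq
      (LinearMap.range (fB B)) (LinearMap.range (fB B'))
    rw [hinf, finrank_bot, hrank B j0 hj01, hrank B' j0' hj01'] at hsum
    rw [hUeq, hVeq, hspan B, hspan B', hinf, finrank_bot]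
    omega
end

section
/- Under the isomorphism φ = φ^(l) ∘ φ̃^(k), each spread codeword rs[B_0 | ... | B_{l-1}] with B_j ∈ {0} ∪ {P^h} maps to the one-dimensional F_{q^k}-subspace F_{q^k} · Σ_{j=0}^{l-1} γ_j β^j, where γ_j = 0 if B_j = 0 and γ_j = α^h if B_j = P^h. Hence each codeword is uniquely identified by γ = (γ_0,...,γ_{l-1}) ∈ F_{q^k}^l. -/
/-- Under the isomorphism `φ = φ^(l) ∘ φ̃^(k)`, each spread codeword
`rs[B_0 | … | B_{l-1}]` with `B_j ∈ {0} ∪ {P^h}` maps exactly onto the one-dimensional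
`F_{q^k}`-subspace `F_{q^k} · ∑_j γ_j β^j`, where `γ_j = 0` if `B_j = 0` and `γ_j = α^h`
if `B_j = P^h`. -/
theorem stmt8 (k l : ℕ) (F K L : Type*) [Field F] [Field K] [Field L]
    [Algebra F K] [Algebra K L] [Algebra F L] [IsScalarTower F K L]
    (α : K) (bα : Module.Basis (Fin k) F K) (hbα : ∀ i : Fin k, bα i = α ^ (i : ℕ))
    (hdeg : (minpoly F α).natDegree = k)
    (P : Matrix (Fin k) (Fin k) F) (hP : P = companionMatrix (minpoly F α) k)
    (β : L)
    (B : Fin l → Matrix (Fin k) (Fin k) F) (γ : Fin l → K)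
    (hB : ∀ j, (B j = 0 ∧ γ j = 0) ∨ ∃ h : ℕ, B j = P ^ h ∧ γ j = α ^ h)
    (φ : (Fin l × Fin k → F) → L)
    (hφ : ∀ v, φ v = ∑ j : Fin l,
        algebraMap K L (∑ i : Fin k, algebraMap F K (v (j, i)) * α ^ (i : ℕ)) * β ^ (j : ℕ)) :
    φ '' (Submodule.span F
        (Set.range fun i : Fin k => fun jt : Fin l × Fin k => B jt.1 i jt.2) :
          Set (Fin l × Fin k → F))
      = (Submodule.span K {∑ j : Fin l, algebraMap K L (γ j) * β ^ (j : ℕ)} : Set L) := by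
  have hfin : Module.Finite F K := Module.Finite.of_basis bα
  have hint : IsIntegral F α := Algebra.IsIntegral.isIntegral α
  -- the base companion-matrix property
  have hα : ∀ i : Fin k, (∑ t : Fin k, algebraMap F K (P i t) * α ^ (t : ℕ)) = α ^ ((i : ℕ) + 1) := by
    intro i
    subst hP
    by_cases hik : (i : ℕ) + 1 = k
    · have haev : (Polynomial.aeval α) (minpoly F α) = 0 := minpoly.aeval F α
      rw [Polynomial.aeval_eq_sum_range, hdeg, Finset.sum_range_succ] at haev
      have hck : (minpoly F α).coeff k = 1 := by
        have := (minpoly.monic hint).coeff_natDegree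
        rwa [hdeg] at this
      rw [hck, one_smul] at haev
      have hsum : ∑ n ∈ Finset.range k, (minpoly F α).coeff n • α ^ n = -α ^ k :=
        eq_neg_of_add_eq_zero_left haev
      have hfin2 : ∑ t : Fin k, (minpoly F α).coeff (t : ℕ) • α ^ (t : ℕ) = -α ^ k := by
        rw [Fin.sum_univ_eq_sum_range (fun n => (minpoly F α).coeff n • α ^ n) k]
        exact hsum
      simp only [companionMatrix, Matrix.of_apply, hik, if_true]
      calc (∑ t : Fin k, algebraMap F K (-(minpoly F α).coeff (t : ℕ)) * α ^ (t : ℕ))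
          = -∑ t : Fin k, (minpoly F α).coeff (t : ℕ) • α ^ (t : ℕ) := by
            rw [← Finset.sum_neg_distrib]
            exact Finset.sum_congr rfl fun t _ => by
              rw [map_neg, neg_mul, Algebra.smul_def]
        _ = α ^ k := by rw [hfin2, neg_neg]
    · have hlt : (i : ℕ) + 1 < k := lt_of_le_of_ne i.2 hik
      set i' : Fin k := ⟨(i : ℕ) + 1, hlt⟩ with hi'
      simp only [companionMatrix, Matrix.of_apply, hik, if_false]
      rw [Finset.sum_eq_single i']
      · simp [hi']
      · intro t _ ht
        have : ¬ ((t : ℕ) = (i : ℕ) + 1) := by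
          intro hc
          exact ht (Fin.ext (by simp [hi', hc]))
        simp [this]
      · intro h; exact absurd (Finset.mem_univ i') h
  -- powers of the companion matrix
  have hPh : ∀ (h : ℕ) (i : Fin k),
      (∑ t : Fin k, algebraMap F K ((P ^ h) i t) * α ^ (t : ℕ)) = α ^ h * α ^ (i : ℕ) := by
    intro h
    induction h with
    | zero =>
      intro i
      simp only [pow_zero, Matrix.one_apply]
      rw [Finset.sum_eq_single i]
      · simp
      · intro t _ ht; simp [Ne.symm ht]
      · intro h; exact absurd (Finset.mem_univ i) h
    | succ n ih =>
      intro i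
      have : P ^ (n + 1) = P * P ^ n := by rw [pow_succ']
      rw [this]
      calc (∑ t : Fin k, algebraMap F K ((P * P ^ n) i t) * α ^ (t : ℕ))
          = ∑ t : Fin k, ∑ s : Fin k,
              algebraMap F K (P i s) * (algebraMap F K ((P ^ n) s t) * α ^ (t : ℕ)) := by
            refine Finset.sum_congr rfl fun t _ => ?_
            rw [Matrix.mul_apply, map_sum, Finset.sum_mul]
            exact Finset.sum_congr rfl fun s _ => by rw [map_mul, mul_assoc]
        _ = ∑ s : Fin k, algebraMap F K (P i s) *
              (∑ t : Fin k, algebraMap F K ((P ^ n) s t) * α ^ (t : ℕ)) := by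
            rw [Finset.sum_comm]
            exact Finset.sum_congr rfl fun s _ => by rw [Finset.mul_sum]
        _ = ∑ s : Fin k, algebraMap F K (P i s) * (α ^ n * α ^ (s : ℕ)) := by
            exact Finset.sum_congr rfl fun s _ => by rw [ih s]
        _ = α ^ n * ∑ s : Fin k, algebraMap F K (P i s) * α ^ (s : ℕ) := by
            rw [Finset.mul_sum]; exact Finset.sum_congr rfl fun s _ => by ring
        _ = α ^ (n + 1) * α ^ (i : ℕ) := by
            rw [hα i, ← pow_add, ← pow_add]; ring_nf
  set s : L := ∑ j : Fin l, algebraMap K L (γ j) * β ^ (j : ℕ) with hs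
  -- φ of each generator
  have hgen : ∀ i : Fin k,
      φ (fun jt => B jt.1 i jt.2) = algebraMap K L (α ^ (i : ℕ)) * s := by
    intro i
    rw [hφ, hs, Finset.mul_sum]
    refine Finset.sum_congr rfl fun j _ => ?_
    rw [← mul_assoc, ← map_mul]
    congr 1
    simp only [show ∀ t : Fin k, B (j, t).1 i (j, t).2 = B j i t from fun _ => rfl]
    rcases hB j with ⟨hB0, hg0⟩ | ⟨h, hBh, hgh⟩
    · simp [hB0, hg0]
    · rw [hBh, hgh, hPh h i, mul_comm]
  -- φ as a linear map
  let ψ : (Fin l × Fin k → F) →ₗ[F] L :=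
    { toFun := φ
      map_add' := by
        intro u v
        simp only [hφ, Pi.add_apply]
        rw [← Finset.sum_add_distrib]
        refine Finset.sum_congr rfl fun j _ => ?_
        rw [← add_mul, ← map_add, ← Finset.sum_add_distrib]
        congr 2
        exact Finset.sum_congr rfl fun i _ => by rw [map_add, add_mul]
      map_smul' := by
        intro c v
        simp only [hφ, Pi.smul_apply, smul_eq_mul, RingHom.id_apply, Finset.smul_sum]
        refine Finset.sum_congr rfl fun j _ => ?_
        have h1 : (∑ i : Fin k, algebraMap F K (c * v (j, i)) * α ^ (i : ℕ))
            = algebraMap F K c * ∑ i : Fin k, algebraMap F K (v (j, i)) * α ^ (i : ℕ) := by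
          rw [Finset.mul_sum]
          exact Finset.sum_congr rfl fun i _ => by rw [map_mul, mul_assoc]
        rw [h1, map_mul, ← IsScalarTower.algebraMap_apply, ← Algebra.smul_def, smul_mul_assoc] }
  have hψ : ∀ v, ψ v = φ v := fun v => rfl
  -- rewrite the image as a span
  have himg : φ '' (Submodule.span F
      (Set.range fun i : Fin k => fun jt : Fin l × Fin k => B jt.1 i jt.2) :
        Set (Fin l × Fin k → F))
      = (Submodule.span F (Set.range fun i : Fin k => algebraMap K L (α ^ (i : ℕ)) * s) : Set L) := by
    rw [show φ = ⇑ψ from rfl, ← Submodule.map_coe, Submodule.map_span]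
    rw [← Set.range_comp]
    exact congrArg (fun t => (Submodule.span F t : Set L))
      (congrArg Set.range (funext fun i => hgen i))
  rw [himg]
  -- the F-span of the α^i • s equals the K-span of s
  apply Set.eq_of_subset_of_subset
  · have hle : Submodule.span F (Set.range fun i : Fin k => algebraMap K L (α ^ (i : ℕ)) * s)
        ≤ (Submodule.span K {s}).restrictScalars F := by
      rw [Submodule.span_le]
      rintro x ⟨i, rfl⟩
      simp only [Submodule.coe_restrictScalars, SetLike.mem_coe]
      rw [← Algebra.smul_def]
      exact Submodule.smul_mem _ _ (Submodule.mem_span_singleton_self s)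
    exact fun x hx => hle hx
  · intro x hx
    rw [SetLike.mem_coe, Submodule.mem_span_singleton] at hx
    obtain ⟨c, rfl⟩ := hx
    rw [SetLike.mem_coe]
    have hc : c = ∑ i : Fin k, bα.repr c i • α ^ (i : ℕ) := by
      conv_lhs => rw [← bα.sum_repr c]
      exact Finset.sum_congr rfl fun i _ => by rw [hbα i]
    rw [hc, Finset.sum_smul]
    refine Submodule.sum_mem _ fun i _ => ?_
    rw [smul_assoc]
    refine Submodule.smul_mem _ _ (Submodule.subset_span ⟨i, ?_⟩)
    exact (Algebra.smul_def (α ^ (i : ℕ)) s).symm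
end

section
/- Let R = U' ⊕ E where U' is a subspace of a codeword U ∈ G_q(k,n) and E is an error space of dimension f, with dim R = k' and basis r_1,...,r_{k'} of R. Then the set L = { Σ_{i∈I} λ_i r_i : λ_i ∈ F_q, I ⊂ {1,...,k'}, |I| = f+1 } contains k' − f linearly independent elements of U. -/
/-- Let `R = U' ⊕ E` with `U' ⊆ U ∈ G_q(k,n)` and `dim E = f < k' = dim R`,
and let `r_1, …, r_{k'}` be a basis of `R`. Then the set
`L = { ∑_{i∈I} λ_i r_i : λ_i ∈ F_q, I ⊂ {1,…,k'}, |I| = f+1 }` contains `k' − f`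
linearly independent elements of `U`. -/
theorem stmt11 (q n k k' f : ℕ) (F : Type*) [Field F] [Fintype F] (hq : Fintype.card F = q)
    (U U' E R : Submodule F (Fin n → F))
    (hUk : Module.finrank F U = k) (hU' : U' ≤ U)
    (hEf : Module.finrank F E = f) (hdisj : U' ⊓ E = ⊥) (hR : R = U' ⊔ E)
    (hRk' : Module.finrank F R = k') (hf : f < k')
    (r : Fin k' → (Fin n → F))
    (hli : LinearIndependent F r) (hspan : Submodule.span F (Set.range r) = R) :
    ∃ s : Fin (k' - f) → (Fin n → F), LinearIndependent F s ∧
      ∀ m, s m ∈ U ∧ ∃ (I : Finset (Fin k')) (lam : Fin k' → F),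
        I.card = f + 1 ∧ s m = ∑ i ∈ I, lam i • r i := by
  classical
  have hk'pos : 0 < k' := lt_of_le_of_lt (Nat.zero_le f) hf
  set φ := U'.mkQ with hφ
  set v : Fin k' → ((Fin n → F) ⧸ U') := fun i => φ (r i) with hv
  -- the span of the `v i` is the image of `E`, of finrank ≤ f
  have hmapU' : Submodule.map φ U' = ⊥ := by
    rw [eq_bot_iff]
    rintro x ⟨y, hy, rfl⟩
    simp only [Submodule.mem_bot]
    rwa [hφ, Submodule.mkQ_apply, Submodule.Quotient.mk_eq_zero]
  have hspanv : Submodule.span F (Set.range v) = Submodule.map φ E := by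
    have h1 : Set.range v = φ '' Set.range r := (Set.range_comp φ r)
    rw [h1, ← Submodule.map_span, hspan, hR, Submodule.map_sup, hmapU', bot_sup_eq]
  have hfinr : Module.finrank F (Submodule.span F (Set.range v)) ≤ f := by
    rw [hspanv]
    exact hEf ▸ Submodule.finrank_map_le φ E
  -- extract a spanning subfamily of size ≤ f
  obtain ⟨t, hts, htspan, htind⟩ := exists_linearIndependent F (Set.range v)
  have htfin : t.Finite := (Set.finite_range v).subset hts
  haveI : Fintype t := htfin.fintype
  have htcard : t.toFinset.card ≤ f := by
    rw [← finrank_span_set_eq_card htind, htspan]; exact hfinr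
  choose p hp using fun (y : (Fin n → F) ⧸ U') (hy : y ∈ t) => hts hy
  set p' : ((Fin n → F) ⧸ U') → Fin k' :=
    fun y => if h : y ∈ t then p y h else ⟨0, hk'pos⟩ with hp'
  set J0 : Finset (Fin k') := t.toFinset.image p' with hJ0
  have hJ0card : J0.card ≤ f := le_trans (Finset.card_image_le) htcard
  have hspanJ0 : ∀ i, v i ∈ Submodule.span F (v '' ↑J0) := by
    intro i
    have h1 : t ⊆ v '' ↑J0 := by
      intro y hy
      refine ⟨p' y, ?_, ?_⟩
      · exact Finset.mem_coe.2 (Finset.mem_image.2 ⟨y, Set.mem_toFinset.2 hy, rfl⟩)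
      · simp only [hp', dif_pos hy]; exact hp y hy
    have h2 : v i ∈ Submodule.span F t := by
      rw [htspan]; exact Submodule.subset_span (Set.mem_range_self i)
    exact Submodule.span_mono h1 h2
  -- coefficients expressing each `v i` over `J0`
  have hcoef : ∀ i : Fin k', ∃ c : ↥J0 → F, ∑ j : ↥J0, c j • v ↑j = v i := by
    intro i
    have h1 : v '' ↑J0 = Set.range (fun j : ↥J0 => v ↑j) := by
      ext x; simp [Set.mem_image]
    have h2 := hspanJ0 i
    rw [h1, Submodule.mem_span_range_iff_exists_fun] at h2
    exact h2
  choose g hg using hcoef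
  set G : Fin k' → Fin k' → F :=
    fun i j => if h : j ∈ J0 then g i ⟨j, h⟩ else 0 with hGdef
  have hG : ∀ i, ∑ j ∈ J0, G i j • v j = v i := by
    intro i
    rw [← hg i, ← Finset.sum_coe_sort J0 (fun j => G i j • v j)]
    refine Finset.sum_congr rfl fun j _ => ?_
    simp only [hGdef, dif_pos j.2]
  -- pick k'-f indices outside J0
  have hcompl : k' - f ≤ J0ᶜ.card := by
    rw [Finset.card_compl, Fintype.card_fin]
    omega
  obtain ⟨C, hCsub, hCcard⟩ := Finset.exists_subset_card_eq hcompl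
  haveI : Fintype ↥C := FinsetCoe.fintype C
  have hCcard' : Fintype.card ↥C = k' - f := by rw [Fintype.card_coe]; exact hCcard
  set eC := Fintype.equivFinOfCardEq hCcard' with heC
  set em : Fin (k' - f) → Fin k' := fun m => ↑(eC.symm m) with hem
  have hem_inj : Function.Injective em := fun a b h =>
    eC.symm.injective (Subtype.coe_injective h)
  have hem_notJ0 : ∀ m, em m ∉ J0 := by
    intro m
    have h1 : (eC.symm m : Fin k') ∈ J0ᶜ := hCsub (eC.symm m).2
    exact Finset.mem_compl.1 h1
  -- the coefficient vectors
  set c : Fin (k' - f) → Fin k' → F :=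
    fun m i => if i = em m then 1 else -(G (em m) i) with hc
  have hczero : ∀ m i, i ∉ insert (em m) J0 → c m i = 0 := by
    intro m i hi
    have hi1 : i ≠ em m := fun h => hi (h ▸ Finset.mem_insert_self _ _)
    have hi2 : i ∉ J0 := fun h => hi (Finset.mem_insert_of_mem h)
    simp [hc, hi1, hGdef, hi2]
  set s : Fin (k' - f) → (Fin n → F) := fun m => ∑ i, c m i • r i with hs
  -- generic sum computation
  have hsum : ∀ (w : Fin k' → (Fin n → F)) (m : Fin (k' - f)),
      ∑ i, c m i • w i = w (em m) - ∑ j ∈ J0, G (em m) j • w j := by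
    intro w m
    have h1 : ∑ i, c m i • w i = ∑ i ∈ insert (em m) J0, c m i • w i := by
      symm
      refine Finset.sum_subset (Finset.subset_univ _) fun i _ hi => ?_
      rw [hczero m i hi, zero_smul]
    rw [h1, Finset.sum_insert (hem_notJ0 m)]
    have h2 : ∑ j ∈ J0, c m j • w j = -∑ j ∈ J0, G (em m) j • w j := by
      rw [← Finset.sum_neg_distrib]
      refine Finset.sum_congr rfl fun j hj => ?_
      have hj1 : j ≠ em m := fun h => hem_notJ0 m (h ▸ hj)
      simp [hc, hj1, neg_smul]
    rw [h2]
    simp [hc, sub_eq_add_neg]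
  have hsumv : ∀ (m : Fin (k' - f)),
      ∑ i, c m i • v i = v (em m) - ∑ j ∈ J0, G (em m) j • v j := by
    intro m
    have h1 : ∑ i, c m i • v i = U'.mkQ (∑ i, c m i • r i) := by
      rw [map_sum]; simp [hv, hφ]
    have h2 : v (em m) - ∑ j ∈ J0, G (em m) j • v j
        = U'.mkQ (r (em m) - ∑ j ∈ J0, G (em m) j • r j) := by
      rw [map_sub, map_sum]; simp [hv, hφ]
    rw [h1, h2, ← hsum r m]
  -- membership in U'
  have hmem : ∀ m, s m ∈ U' := by
    intro m
    have h0 : φ (s m) = ∑ i, c m i • v i := by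
      rw [hs]; simp only [map_sum, map_smul]; rfl
    have h1 : φ (s m) = 0 := by
      rw [h0, hsumv m, hG (em m), sub_self]
    rwa [hφ, Submodule.mkQ_apply, Submodule.Quotient.mk_eq_zero] at h1
  refine ⟨s, ?_, fun m => ⟨hU' (hmem m), ?_⟩⟩
  · -- linear independence
    rw [Fintype.linearIndependent_iff]
    intro a ha m0
    have hrw : ∑ m, a m • s m = ∑ i, (∑ m, a m * c m i) • r i := by
      calc ∑ m, a m • s m = ∑ m, ∑ i, (a m * c m i) • r i := by
            simp [hs, Finset.smul_sum, smul_smul]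
        _ = ∑ i, ∑ m, (a m * c m i) • r i := Finset.sum_comm
        _ = ∑ i, (∑ m, a m * c m i) • r i := by
            simp [Finset.sum_smul]
    have hz := Fintype.linearIndependent_iff.mp hli (fun i => ∑ m, a m * c m i)
      (by rw [← hrw]; exact ha)
    have h1 : ∑ m, a m * c m (em m0) = 0 := hz (em m0)
    have h2 : ∑ m, a m * c m (em m0) = a m0 := by
      rw [Finset.sum_eq_single m0]
      · simp [hc]
      · intro m _ hm
        have hne : em m0 ≠ em m := fun h => hm (hem_inj h).symm
        have hG0 : G (em m) (em m0) = 0 := dif_neg (hem_notJ0 m0)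
        simp [hc, hne, hG0]
      · simp
    rw [h2] at h1
    exact h1
  · -- representation over a set of size f+1
    have hins : (insert (em m) J0).card ≤ f + 1 :=
      le_trans (Finset.card_insert_le _ _) (by omega)
    have huniv : f + 1 ≤ (Finset.univ : Finset (Fin k')).card := by
      rw [Finset.card_univ, Fintype.card_fin]; omega
    obtain ⟨I, hI1, _, hI3⟩ :=
      Finset.exists_subsuperset_card_eq (Finset.subset_univ (insert (em m) J0)) hins huniv
    refine ⟨I, c m, hI3, ?_⟩
    rw [hs]
    symm
    refine Finset.sum_subset (Finset.subset_univ I) fun i _ hi => ?_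
    have : i ∉ insert (em m) J0 := fun h => hi (hI1 h)
    rw [hczero m i this, zero_smul]
end

section
/- Let R = U' ⊕ E with U' ⊆ U ∈ G_q(k,n), dim E = f, dim R = k', and suppose d_S(R,U) ≤ ⌊(2k−1)/2⌋. Then f ≤ (k'−1)/2, and the set of F_q-linear combinations of at most f+1 of the basis vectors r_1,...,r_{k'} of R contains at least ⌈(k'+1)/2⌉ linearly independent elements of U. -/
open Module Submodule Set

lemma single_one_injective {F : Type*} [Field F] {N : ℕ} :
    Function.Injective (fun i : Fin N => Pi.single i (1 : F)) := by
  intro i j h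
  by_contra hne
  have h1 := congrFun h i
  simp [Pi.single_apply, hne] at h1

lemma aux_support {F : Type*} [Field F] {N d c : ℕ} (V' : Submodule F (Fin N → F))
    (hV : Module.finrank F V' = d) (hc : c ≤ d) :
    ∃ w : Fin c → (Fin N → F), LinearIndependent F w ∧ ∀ m, w m ∈ V' ∧
      ∃ I : Finset (Fin N), I.card ≤ N - d + 1 ∧ ∀ i, i ∉ I → w m i = 0 := by
  classical
  -- basis of V'
  set B : Basis (Fin d) F V' := (Module.finBasis F V').reindex (finCongr hV) with hB
  set v : Fin d → (Fin N → F) := fun i => (B i : Fin N → F) with hv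
  have hvli : LinearIndependent F v := B.linearIndependent.map' V'.subtype V'.ker_subtype
  set s : Set (Fin N → F) := Set.range v with hsdef
  have hs : LinearIndepOn F id s := (linearIndepOn_id_range_iff hvli.injective).mpr hvli
  set t : Set (Fin N → F) := s ∪ Set.range (fun i : Fin N => Pi.single i (1:F)) with htdef
  have ht : ⊤ ≤ span F t := by
    rw [← (Pi.basisFun F (Fin N)).span_eq]
    apply span_mono
    intro x hx
    obtain ⟨i, rfl⟩ := hx
    exact Or.inr ⟨i, by simp⟩
  set bset : Set (Fin N → F) := hs.extend Set.subset_union_left with hbset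
  have bas : Basis bset F (Fin N → F) := Basis.extendLe hs Set.subset_union_left ht
  have hsb : s ⊆ bset := hs.subset_extend _
  have hbt : bset ⊆ t := hs.extend_subset _
  haveI : Fintype bset := FiniteDimensional.fintypeBasisIndex bas
  have hbfin : bset.Finite := bset.toFinite
  have hbcard : bset.ncard = N := by
    rw [← Nat.card_coe_set_eq, Nat.card_eq_fintype_card, ← Module.finrank_eq_card_basis bas,
      Module.finrank_fintype_fun_eq_card, Fintype.card_fin]
  have hscard : s.ncard = d := by
    rw [← Nat.card_coe_set_eq, Nat.card_range_of_injective hvli.injective,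
      Nat.card_eq_fintype_card, Fintype.card_fin]
  have hdN : d ≤ N := by
    rw [← hbcard, ← hscard]
    exact Set.ncard_le_ncard hsb hbfin
  -- the complementary index set K
  set K : Finset (Fin N) := Finset.univ.filter (fun i => Pi.single i (1:F) ∈ bset \ s) with hK
  have hKimage : (fun i : Fin N => Pi.single i (1:F)) '' ↑K = bset \ s := by
    apply Set.Subset.antisymm
    · rintro x ⟨i, hi, rfl⟩
      simp only [hK, Finset.coe_filter, Set.mem_setOf_eq, Finset.mem_univ, true_and] at hi
      exact hi
    · intro x hx
      have hxt : x ∈ t := hbt hx.1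
      rcases hxt with hxs | ⟨i, rfl⟩
      · exact absurd hxs hx.2
      · exact ⟨i, by simpa [hK] using hx, rfl⟩
  have hKcard : K.card = N - d := by
    have h1 : ((fun i : Fin N => Pi.single i (1:F)) '' ↑K).ncard = K.card := by
      rw [Set.ncard_image_of_injective _ single_one_injective, Set.ncard_coe_finset]
    rw [hKimage, Set.ncard_diff hsb (hbfin.subset hsb), hbcard, hscard] at h1
    omega
  -- complement subspace spanned by standard vectors indexed by K
  set C : Submodule F (Fin N → F) := span F ((fun i : Fin N => Pi.single i (1:F)) '' ↑K) with hC
  have hspanb : span F bset = ⊤ :=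
    eq_top_iff.2 (le_trans ht (span_le.2 (hs.subset_span_extend Set.subset_union_left)))
  have hTop : V' ⊔ C = ⊤ := by
    rw [eq_top_iff, ← hspanb]
    refine span_le.2 ?_
    intro x hx
    by_cases hxs : x ∈ s
    · obtain ⟨i, rfl⟩ := hxs
      exact Submodule.mem_sup_left (B i).2
    · have hx2 : x ∈ bset \ s := ⟨hx, hxs⟩
      rw [← hKimage] at hx2
      exact Submodule.mem_sup_right (subset_span hx2)
  have hCrank : Module.finrank F C ≤ N - d := by
    have h1 := finrank_span_finset_le_card (R := F) (K.image (fun i : Fin N => Pi.single i (1:F)))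
    rw [Finset.coe_image] at h1
    calc Module.finrank F C ≤ (K.image (fun i : Fin N => Pi.single i (1:F))).card := h1
    _ ≤ K.card := Finset.card_image_le
    _ = N - d := hKcard
  have hdim := Submodule.finrank_sup_add_finrank_inf_eq V' C
  have htop' : Module.finrank F ↥(V' ⊔ C) = N := by
    rw [hTop, finrank_top, Module.finrank_fintype_fun_eq_card, Fintype.card_fin]
  have hBot : V' ⊓ C = ⊥ := by
    have h1 : Module.finrank F ↥(V' ⊓ C) = 0 := by omega
    exact Submodule.finrank_eq_zero.mp h1
  -- the projection onto coordinates in J := Kᶜ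
  set J : Finset (Fin N) := Kᶜ with hJ
  have hJcard : J.card = d := by
    rw [hJ, Finset.card_compl, Fintype.card_fin, hKcard]; omega
  set π : (Fin N → F) →ₗ[F] ({x // x ∈ J} → F) := LinearMap.funLeft F F (fun j => (j : Fin N))
    with hπ
  have hker : ∀ x : Fin N → F, (∀ j : {x // x ∈ J}, x j = 0) → x ∈ C := by
    intro x hx
    have hxeq : x = ∑ i ∈ K, x i • (Pi.single i (1:F) : Fin N → F) := by
      funext j
      rw [Finset.sum_apply]
      simp only [Pi.smul_apply, Pi.single_apply, smul_eq_mul, mul_ite, mul_one, mul_zero]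
      rw [Finset.sum_ite_eq K j x]
      by_cases hjK : j ∈ K
      · simp [hjK]
      · have hjJ : j ∈ J := by simp [hJ, hjK]
        simp [hjK, hx ⟨j, hjJ⟩]
    rw [hxeq]
    exact sum_mem fun i hi => smul_mem _ _ (subset_span ⟨i, hi, rfl⟩)
  have hπVinj : Function.Injective (π.comp V'.subtype) := by
    rw [← LinearMap.ker_eq_bot, eq_bot_iff]
    intro x hx
    simp only [LinearMap.mem_ker, LinearMap.comp_apply] at hx
    have h0 : (x : Fin N → F) ∈ V' ⊓ C := ⟨x.2, hker _ fun j => congrFun hx j⟩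
    rw [hBot, Submodule.mem_bot] at h0
    exact (Submodule.mem_bot F).2 (Subtype.ext h0)
  have hfr : Module.finrank F ↥V' = Module.finrank F ({x // x ∈ J} → F) := by
    rw [hV, Module.finrank_fintype_fun_eq_card, Fintype.card_coe, hJcard]
  have hπVsurj : Function.Surjective (π.comp V'.subtype) :=
    (LinearMap.injective_iff_surjective_of_finrank_eq_finrank hfr).mp hπVinj
  set eqv : ↥V' ≃ₗ[F] ({x // x ∈ J} → F) :=
    LinearEquiv.ofBijective (π.comp V'.subtype) ⟨hπVinj, hπVsurj⟩ with heqv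
  have hcard' : c ≤ Fintype.card {x // x ∈ J} := by rw [Fintype.card_coe, hJcard]; exact hc
  set emb : Fin c ↪ {x // x ∈ J} :=
    (Fin.castLEEmb hcard').trans (Fintype.equivFin {x // x ∈ J}).symm.toEmbedding with hemb
  set w' : Fin c → ↥V' := fun m => eqv.symm (Pi.single (emb m) (1:F)) with hw'
  refine ⟨fun m => (w' m : Fin N → F), ?_, ?_⟩
  · -- linear independence
    have hbase : LinearIndependent F (fun j : {x // x ∈ J} => Pi.single j (1:F)) := by
      have h := (Pi.basisFun F {x // x ∈ J}).linearIndependent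
      rwa [show ⇑(Pi.basisFun F {x // x ∈ J}) = fun j => Pi.single j (1:F) from
        funext fun j => Pi.basisFun_apply _ _ _] at h
    have h1 := hbase.comp emb emb.injective
    have h2 := h1.map' eqv.symm.toLinearMap eqv.symm.ker
    exact h2.map' V'.subtype V'.ker_subtype
  · intro m
    refine ⟨(w' m).2, K ∪ {(emb m : Fin N)}, ?_, ?_⟩
    · calc (K ∪ {(emb m : Fin N)}).card ≤ K.card + 1 := by
            simpa using Finset.card_union_le K {(emb m : Fin N)}
      _ = N - d + 1 := by rw [hKcard]
    · intro i hi
      simp only [Finset.mem_union, Finset.mem_singleton, not_or] at hi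
      obtain ⟨hiK, hine⟩ := hi
      have hiJ : i ∈ J := by simp [hJ, hiK]
      have h1 : (π.comp V'.subtype) (w' m) = Pi.single (emb m) (1:F) := by
        have h := eqv.apply_symm_apply (Pi.single (emb m) (1:F))
        rw [heqv] at h
        exact h
      have h2 := congrFun h1 ⟨i, hiJ⟩
      have hne : (⟨i, hiJ⟩ : {x // x ∈ J}) ≠ emb m := fun hcon =>
        hine (by rw [← hcon])
      rw [Pi.single_eq_of_ne hne] at h2
      exact h2


/-- Let `R = U' ⊕ E` with `U' ⊆ U ∈ G_q(k,n)`, `dim E = f`, `dim R = k'`,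
and suppose `d_S(R,U) = k + k' − 2 dim(R∩U) ≤ ⌊(2k−1)/2⌋ = k−1`. Then `f ≤ (k'−1)/2`,
and the set of `F_q`-linear combinations of at most `f+1` of the basis vectors
`r_1, …, r_{k'}` of `R` contains at least `⌈(k'+1)/2⌉` linearly independent elements
of `U`. -/
theorem stmt12 (q n k k' f : ℕ) (F : Type*) [Field F] [Fintype F] (hq : Fintype.card F = q)
    (hk : 0 < k)
    (U U' E R : Submodule F (Fin n → F))
    (hUk : Module.finrank F U = k) (hU' : U' ≤ U)
    (hEf : Module.finrank F E = f) (hdisj : U' ⊓ E = ⊥) (hUE : U ⊓ E = ⊥)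
    (hR : R = U' ⊔ E) (hRk' : Module.finrank F R = k')
    (r : Fin k' → (Fin n → F))
    (hli : LinearIndependent F r) (hspan : Submodule.span F (Set.range r) = R)
    (hdec : k + k' - 2 * Module.finrank F ↥(R ⊓ U) ≤ k - 1) :
    2 * f + 1 ≤ k' ∧
      ∃ s : Fin ((k' + 2) / 2) → (Fin n → F), LinearIndependent F s ∧
        ∀ m, s m ∈ U ∧ ∃ (I : Finset (Fin k')) (lam : Fin k' → F),
          I.card ≤ f + 1 ∧ s m = ∑ i ∈ I, lam i • r i := by
  classical
  have hRU : R ⊓ U = U' := by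
    rw [hR, sup_inf_assoc_of_le _ hU', inf_comm E U, hUE, sup_bot_eq]
  have hsum := Submodule.finrank_sup_add_finrank_inf_eq U' E
  rw [hdisj, finrank_bot, ← hR, hRk', hEf] at hsum
  rw [hRU] at hdec
  have part1 : 2 * f + 1 ≤ k' := by omega
  -- part 2
  set W := Submodule.span F (Set.range r) with hWdef
  have hU'W : U' ≤ W := by rw [hspan, hR]; exact le_sup_left
  set b : Basis (Fin k') F W := Basis.span hli with hb
  set V := U'.comap W.subtype with hVdef
  set_option synthInstance.maxHeartbeats 1000000 in
  have hVdim : Module.finrank F V = Module.finrank F U' :=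
    (Submodule.comapSubtypeEquivOfLe hU'W).finrank_eq
  set V' := V.map (b.equivFun : W ≃ₗ[F] (Fin k' → F)).toLinearMap with hV'def
  have hV'dim : Module.finrank F V' = k' - f := by
    rw [LinearEquiv.finrank_map_eq, hVdim]; omega
  obtain ⟨w, hwli, hw⟩ :=
    aux_support (c := (k' + 2) / 2) V' hV'dim (by omega)
  refine ⟨part1, fun m => (W.subtype.comp b.equivFun.symm.toLinearMap) (w m), ?_, ?_⟩
  · exact (hwli.map' b.equivFun.symm.toLinearMap b.equivFun.symm.ker).map'
      W.subtype W.ker_subtype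
  · intro m
    obtain ⟨hwV', I, hIcard, hI0⟩ := hw m
    have hx : b.equivFun.symm (w m) ∈ V := by
      rcases Submodule.mem_map.mp hwV' with ⟨y, hyV, hy⟩
      have hxy : b.equivFun.symm (w m) = y := by
        rw [LinearEquiv.symm_apply_eq]; exact hy.symm
      rw [hxy]; exact hyV
    constructor
    · exact hU' (Submodule.mem_comap.mp hx)
    · refine ⟨I, w m, by omega, ?_⟩
      have hfull : (W.subtype.comp b.equivFun.symm.toLinearMap) (w m)
          = ∑ i, w m i • r i := by
        simp only [LinearMap.comp_apply, LinearEquiv.coe_toLinearMap, Basis.equivFun_symm_apply]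
        rw [map_sum]
        refine Finset.sum_congr rfl fun i _ => ?_
        rw [map_smul]
        congr 1
        exact congrArg Subtype.val (Basis.span_apply hli i)
      show (W.subtype.comp b.equivFun.symm.toLinearMap) (w m) = ∑ i ∈ I, w m i • r i
      rw [hfull]
      exact (Finset.sum_subset (Finset.subset_univ I)
        (fun i _ hiI => by rw [hI0 i hiI, zero_smul])).symm
end

section
/- Let U be a spread codeword with identifier γ = (γ_0,...,γ_{l-1}) and j' = min{j : γ_j ≠ 0}. Let R have a basis r_1,...,r_{k'} in reduced row echelon form, partitioned into sets B_j = {r_i : r_{i,t} = 0 for all t < j and r_{i,j} ≠ 0} (blocks of length k). If d_S(U,R) ≤ k−1, then U ∩ R ⊆ span(∪_{j=j'}^{l-1} B_j) and |B_{j'}| ≥ ⌈(k'−1)/2⌉. -/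
/-- Let `U` be a spread codeword with identifier `γ = (γ_0,…,γ_{l-1})` and
`j' = min{j : γ_j ≠ 0}`. Let `R` have a basis `r_1,…,r_{k'}` in reduced row echelon form
(pivot positions `ρ i`, each vector split into `l` blocks of length `k`), partitioned into
sets `B_j = {r_i : the leading block of r_i is block j}`. If `d_S(U,R) ≤ k−1`, then
`U ∩ R ⊆ span(⋃_{j≥j'} B_j)` and `|B_{j'}| ≥ ⌈(k'−1)/2⌉`. -/
theorem stmt13 (q k l k' : ℕ) (F K L : Type*) [Field F] [Fintype F] [Field K] [Field L]
    [Algebra F K] [Algebra K L] [Algebra F L] [IsScalarTower F K L]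
    (hq : Fintype.card F = q) (hkpos : 0 < k)
    (α : K) (bα : Module.Basis (Fin k) F K) (hbα : ∀ i : Fin k, bα i = α ^ (i : ℕ))
    (β : L) (bβ : Module.Basis (Fin l) K L) (hbβ : ∀ j : Fin l, bβ j = β ^ (j : ℕ))
    (φ : (Fin l × Fin k → F) →ₗ[F] L)
    (hφ : ∀ v, φ v = ∑ j : Fin l,
        algebraMap K L (∑ i : Fin k, algebraMap F K (v (j, i)) * α ^ (i : ℕ)) * β ^ (j : ℕ))
    (γ : Fin l → K) (j' : Fin l) (hj'ne : γ j' ≠ 0) (hj'min : ∀ j, j < j' → γ j = 0)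
    (U R : Submodule F (Fin l × Fin k → F))
    (hU : ∀ v, v ∈ U ↔
        φ v ∈ Submodule.span K {∑ j : Fin l, algebraMap K L (γ j) * β ^ (j : ℕ)})
    (hUk : Module.finrank F U = k) (hRk' : Module.finrank F R = k')
    (r : Fin k' → (Fin l × Fin k → F))
    (hli : LinearIndependent F r) (hspan : Submodule.span F (Set.range r) = R)
    (ρ : Fin k' → Fin l × Fin k)
    (hpiv1 : ∀ i, r i (ρ i) = 1)
    (hpiv0 : ∀ i i', i ≠ i' → r i' (ρ i) = 0)
    (hlead : ∀ i p, (p.1 : ℕ) * k + (p.2 : ℕ) < ((ρ i).1 : ℕ) * k + ((ρ i).2 : ℕ) →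
      r i p = 0)
    (hmono : StrictMono fun i => ((ρ i).1 : ℕ) * k + ((ρ i).2 : ℕ))
    (hdec : k + k' - 2 * Module.finrank F ↥(U ⊓ R) ≤ k - 1) :
    U ⊓ R ≤ Submodule.span F (r '' {i | j' ≤ (ρ i).1}) ∧
      (k' - 1 + 1) / 2 ≤ (Finset.univ.filter fun i => (ρ i).1 = j').card := by

  classical
  set c : L := ∑ j : Fin l, algebraMap K L (γ j) * β ^ (j : ℕ) with hc
  -- Every codeword's blocks are a scalar multiple of γ
  have blockA : ∀ v ∈ U, ∃ lam : K, ∀ j : Fin l,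
      (∑ i : Fin k, algebraMap F K (v (j, i)) * α ^ (i : ℕ)) = lam * γ j := by
    intro v hv
    rw [hU, Submodule.mem_span_singleton] at hv
    obtain ⟨lam, hlam⟩ := hv
    refine ⟨lam, fun j => ?_⟩
    have h0 : ∑ j : Fin l,
        ((∑ i : Fin k, algebraMap F K (v (j, i)) * α ^ (i : ℕ)) - lam * γ j) • bβ j = 0 := by
      have e1 : ∑ j : Fin l,
          (∑ i : Fin k, algebraMap F K (v (j, i)) * α ^ (i : ℕ)) • bβ j = φ v := by
        rw [hφ]
        exact Finset.sum_congr rfl fun j _ => by rw [hbβ, Algebra.smul_def]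
      have e2 : ∑ j : Fin l, (lam * γ j) • bβ j = lam • c := by
        rw [hc, Finset.smul_sum]
        exact Finset.sum_congr rfl fun j _ => by
          rw [hbβ, Algebra.smul_def, map_mul, Algebra.smul_def, mul_assoc]
      simp only [sub_smul, Finset.sum_sub_distrib, e1, e2, hlam, sub_self]
    have := Fintype.linearIndependent_iff.mp bβ.linearIndependent _ h0 j
    exact sub_eq_zero.mp this
  -- blocks before j' vanish
  have blockzero : ∀ v ∈ U, ∀ j : Fin l, j < j' → ∀ i : Fin k, v (j, i) = 0 := by
    intro v hv j hj i
    obtain ⟨lam, hlam⟩ := blockA v hv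
    have hb : ∑ i : Fin k, v (j, i) • bα i = 0 := by
      have : (∑ i : Fin k, algebraMap F K (v (j, i)) * α ^ (i : ℕ)) = 0 := by
        rw [hlam j, hj'min j hj, mul_zero]
      rw [← this]
      exact Finset.sum_congr rfl fun i _ => by rw [hbα, Algebra.smul_def]
    exact Fintype.linearIndependent_iff.mp bα.linearIndependent _ hb i
  -- if block j' vanishes then v = 0
  have vzero : ∀ v ∈ U, (∀ i : Fin k, v (j', i) = 0) → v = 0 := by
    intro v hv hz
    obtain ⟨lam, hlam⟩ := blockA v hv
    have hl0 : lam = 0 := by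
      have h1 : (∑ i : Fin k, algebraMap F K (v (j', i)) * α ^ (i : ℕ)) = 0 := by
        simp [hz]
      rw [hlam j'] at h1
      rcases mul_eq_zero.mp h1 with h | h
      · exact h
      · exact absurd h hj'ne
    funext p
    have hb : ∑ i : Fin k, v (p.1, i) • bα i = 0 := by
      have : (∑ i : Fin k, algebraMap F K (v (p.1, i)) * α ^ (i : ℕ)) = 0 := by
        rw [hlam p.1, hl0, zero_mul]
      rw [← this]
      exact Finset.sum_congr rfl fun i _ => by rw [hbα, Algebra.smul_def]
    have := Fintype.linearIndependent_iff.mp bα.linearIndependent _ hb p.2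
    simpa using this
  -- echelon coordinates
  have coordB : ∀ v ∈ R, v = ∑ i : Fin k', v (ρ i) • r i := by
    intro v hv
    rw [← hspan] at hv
    obtain ⟨cf, hcf⟩ := (Submodule.mem_span_range_iff_exists_fun F).mp hv
    have hcoef : ∀ i0 : Fin k', cf i0 = v (ρ i0) := by
      intro i0
      rw [← hcf]
      simp only [Finset.sum_apply, Pi.smul_apply, smul_eq_mul]
      rw [Finset.sum_eq_single i0]
      · rw [hpiv1, mul_one]
      · intro b _ hb
        rw [hpiv0 i0 b (Ne.symm hb) , mul_zero]
      · intro h; exact absurd (Finset.mem_univ i0) h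
    calc v = ∑ i : Fin k', cf i • r i := hcf.symm
      _ = ∑ i : Fin k', v (ρ i) • r i :=
        Finset.sum_congr rfl fun i _ => by rw [hcoef i]
  -- earlier blocks of r i vanish
  have lemC : ∀ i : Fin k', ∀ p : Fin l × Fin k, p.1 < (ρ i).1 → r i p = 0 := by
    intro i p hp
    apply hlead
    have h1 : (p.1 : ℕ) + 1 ≤ ((ρ i).1 : ℕ) := hp
    have h2 : ((p.1 : ℕ) + 1) * k ≤ ((ρ i).1 : ℕ) * k := Nat.mul_le_mul_right k h1
    have h3 : (p.2 : ℕ) < k := p.2.isLt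
    nlinarith
  constructor
  · intro v hv
    obtain ⟨hvU, hvR⟩ := hv
    rw [coordB v hvR]
    refine Submodule.sum_mem _ fun i _ => ?_
    by_cases h : j' ≤ (ρ i).1
    · exact Submodule.smul_mem _ _ (Submodule.subset_span ⟨i, h, rfl⟩)
    · have hz : v (ρ i) = 0 := by
        have := blockzero v hvU (ρ i).1 (lt_of_not_ge h) (ρ i).2
        simpa using this
      rw [hz, zero_smul]
      exact Submodule.zero_mem _
  · -- injective map into functions on B_{j'}
    set S : Type _ := {i : Fin k' // (ρ i).1 = j'} with hS
    let T : ↥(U ⊓ R) →ₗ[F] (S → F) :=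
      { toFun := fun v i => (v : Fin l × Fin k → F) (ρ i.1)
        map_add' := fun x y => rfl
        map_smul' := fun cc x => rfl }
    have hTinj : Function.Injective T := by
      rw [injective_iff_map_eq_zero]
      intro v hv0
      have hvU : (v : Fin l × Fin k → F) ∈ U := v.2.1
      have hvR : (v : Fin l × Fin k → F) ∈ R := v.2.2
      have hzz : ∀ i : Fin k', (ρ i).1 = j' → (v : Fin l × Fin k → F) (ρ i) = 0 := by
        intro i hi
        exact congrFun hv0 ⟨i, hi⟩
      have hz : (v : Fin l × Fin k → F) = 0 := by
        apply vzero _ hvU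
        intro i0
        have hrep := coordB _ hvR
        have : (v : Fin l × Fin k → F) (j', i0)
            = ∑ i : Fin k', (v : Fin l × Fin k → F) (ρ i) * r i (j', i0) := by
          conv_lhs => rw [hrep]
          simp [Finset.sum_apply]
        rw [this]
        apply Finset.sum_eq_zero
        intro i _
        rcases lt_trichotomy ((ρ i).1) j' with h | h | h
        · have := blockzero _ hvU (ρ i).1 h (ρ i).2
          simp only [Prod.mk.eta] at this
          rw [this, zero_mul]
        · rw [hzz i h, zero_mul]
        · rw [lemC i (j', i0) h, mul_zero]
      exact Subtype.ext hz
    have hfin : Module.finrank F ↥(U ⊓ R) ≤ Module.finrank F (S → F) :=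
      LinearMap.finrank_le_finrank_of_injective hTinj
    have hcard : Module.finrank F (S → F)
        = (Finset.univ.filter fun i => (ρ i).1 = j').card := by
      rw [Module.finrank_pi, Fintype.card_subtype]
    rw [hcard] at hfin
    omega
end
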